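/- Let ρ be the Riesz product generated by coefficients α_j ∈ [−1,1] and frequencies ℓ_j with ℓ_{j+1} ≥ 3ℓ_j, i.e., the weak limit of dρ_n(e^{iθ}) = Π_{j=0}^n (1 + α_j cos(ℓ_j θ)) dθ/(2π). With N_n = Σ_{j=0}^n ℓ_j, one has e_{N_n}(ρ)² ≥ Π_{j=0}^n (1/2)(1 + √(1 − α_j²)). -/

import Mathlib

open MeasureTheory Complex Polynomial Filter

/-- The squared Szegő minimum `e_n(ρ)²`. -/
noncomputable def szegoE2 (ρ : Measure ℂ) (n : ℕ) : ℝ :=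
  sInf { x | ∃ q : Polynomial ℂ, q.Monic ∧ q.natDegree = n ∧
    x = ∫ z, ‖q.eval z‖ ^ 2 ∂ρ }

/-- The partial Riesz product `dρ_n(e^{iθ}) = Π_{j=0}^n (1 + α_j cos(ℓ_j θ)) dθ/(2π)`,
pushed forward to the unit circle. -/
noncomputable def rieszPartial (α : ℕ → ℝ) (l : ℕ → ℕ) (n : ℕ) : Measure ℂ :=
  Measure.map (fun θ : ℝ => Complex.exp (θ * Complex.I))
    ((volume.restrict (Set.Ioc (-Real.pi) Real.pi)).withDensity fun θ =>
      ENNReal.ofReal ((2 * Real.pi)⁻¹ *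
        ∏ j ∈ Finset.range (n + 1), (1 + α j * Real.cos (l j * θ))))

open Finset
open scoped Real

noncomputable def rpA (α : ℝ) : ℝ := Real.sqrt ((1 + Real.sqrt (1 - α ^ 2)) / 2)
noncomputable def rpB (α : ℝ) : ℝ := α / (2 * rpA α)

lemma rpA_pos (α : ℝ) : 0 < rpA α := by
  apply Real.sqrt_pos.2
  have := Real.sqrt_nonneg (1 - α ^ 2)
  linarith

lemma rpA_sq (α : ℝ) : rpA α ^ 2 = (1 + Real.sqrt (1 - α ^ 2)) / 2 := by
  have := Real.sqrt_nonneg (1 - α ^ 2)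
  rw [rpA, Real.sq_sqrt]; linarith

lemma rpAB_sq (α : ℝ) (hα : α ^ 2 ≤ 1) : rpA α ^ 2 + rpB α ^ 2 = 1 := by
  have hs : Real.sqrt (1 - α ^ 2) ^ 2 = 1 - α ^ 2 := Real.sq_sqrt (by linarith)
  have hs0 : 0 ≤ Real.sqrt (1 - α ^ 2) := Real.sqrt_nonneg _
  have ha := rpA_pos α
  have ha2 := rpA_sq α
  rw [rpB]
  field_simp
  nlinarith [ha, ha2]

lemma rp2AB (α : ℝ) : 2 * rpA α * rpB α = α := by
  have ha := (rpA_pos α).ne'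
  rw [rpB]; field_simp

lemma factor_norm (a b ψ : ℝ) (hab : a ^ 2 + b ^ 2 = 1) (α : ℝ) (hα : 2 * a * b = α) :
    ‖(b : ℂ) + (a : ℂ) * Complex.exp ((ψ : ℂ) * Complex.I)‖ ^ 2 = 1 + α * Real.cos ψ := by
  have hpc : Real.sin ψ ^ 2 + Real.cos ψ ^ 2 = 1 := Real.sin_sq_add_cos_sq ψ
  rw [Complex.exp_mul_I]
  rw [Complex.sq_norm, Complex.normSq_apply]
  simp [Complex.cos_ofReal_re, ← Complex.ofReal_cos, ← Complex.ofReal_sin]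
  linear_combination a ^ 2 * hpc + hab + Real.cos ψ * hα

lemma int_exp (k j : ℕ) :
    (∫ θ in (-π)..π, Complex.exp ((θ : ℂ) * Complex.I) ^ k *
      (starRingEnd ℂ) (Complex.exp ((θ : ℂ) * Complex.I) ^ j)) =
      if k = j then (2 * π : ℂ) else 0 := by
  have hpt : ∀ θ : ℝ, Complex.exp ((θ : ℂ) * Complex.I) ^ k *
      (starRingEnd ℂ) (Complex.exp ((θ : ℂ) * Complex.I) ^ j) =
      Complex.exp ((((k : ℂ) - j) * Complex.I) * θ) := by
    intro θ
    rw [← Complex.exp_nat_mul, ← Complex.exp_nat_mul, ← Complex.exp_conj, ← Complex.exp_add]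
    congr 1
    simp [Complex.conj_ofReal]
    ring
  simp_rw [hpt]
  rcases eq_or_ne k j with h | h
  · subst h
    simp only [sub_self, zero_mul, Complex.exp_zero]
    rw [intervalIntegral.integral_const, Complex.real_smul]
    push_cast
    ring
  · have hc : ((k : ℂ) - j) * Complex.I ≠ 0 := by
      apply mul_ne_zero _ Complex.I_ne_zero
      rw [sub_ne_zero]
      exact_mod_cast fun hh => h (Nat.cast_injective hh)
    rw [if_neg h, integral_exp_mul_complex hc]
    have hper : Complex.exp (((k : ℂ) - j) * Complex.I * π) =
        Complex.exp (((k : ℂ) - j) * Complex.I * (-π : ℝ)) := by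
      have h1 : ((k : ℂ) - j) * Complex.I * π =
          ((k : ℂ) - j) * Complex.I * (-π : ℝ) + (((k : ℤ) - j : ℤ) : ℂ) * (2 * π * Complex.I) := by
        push_cast; ring
      rw [h1, Complex.exp_add, Complex.exp_int_mul_two_pi_mul_I, mul_one]
    rw [hper, sub_self, zero_div]

lemma parseval (P : Polynomial ℂ) :
    (∫ θ in (-π)..π, ‖P.eval (Complex.exp ((θ : ℂ) * Complex.I))‖ ^ 2) =
      2 * π * ∑ k ∈ range (P.natDegree + 1), ‖P.coeff k‖ ^ 2 := by
  set d := P.natDegree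
  have hzc : Continuous fun θ : ℝ => Complex.exp ((θ : ℂ) * Complex.I) := by
    exact Complex.continuous_exp.comp ((Complex.continuous_ofReal).mul continuous_const)
  have h1 : ∀ θ : ℝ, ((‖P.eval (Complex.exp ((θ : ℂ) * Complex.I))‖ ^ 2 : ℝ) : ℂ) =
      ∑ i ∈ range (d + 1), ∑ j ∈ range (d + 1),
        (P.coeff i * (starRingEnd ℂ) (P.coeff j)) *
          (Complex.exp ((θ : ℂ) * Complex.I) ^ i *
            (starRingEnd ℂ) (Complex.exp ((θ : ℂ) * Complex.I) ^ j)) := by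
    intro θ
    set z := Complex.exp ((θ : ℂ) * Complex.I)
    have : ((‖P.eval z‖ ^ 2 : ℝ) : ℂ) = P.eval z * (starRingEnd ℂ) (P.eval z) := by
      rw [Complex.mul_conj, Complex.sq_norm]
    rw [this, Polynomial.eval_eq_sum_range, map_sum, Finset.sum_mul_sum]
    refine Finset.sum_congr rfl fun i _ => Finset.sum_congr rfl fun j _ => ?_
    rw [map_mul]
    ring
  have key : (∫ θ in (-π)..π, ((‖P.eval (Complex.exp ((θ : ℂ) * Complex.I))‖ ^ 2 : ℝ) : ℂ)) =
      ((2 * π * ∑ k ∈ range (d + 1), ‖P.coeff k‖ ^ 2 : ℝ) : ℂ) := by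
    simp_rw [h1]
    rw [intervalIntegral.integral_finset_sum]
    swap
    · intro i _
      apply Continuous.intervalIntegrable
      apply continuous_finset_sum
      intro j _
      exact continuous_const.mul ((hzc.pow i).mul (continuous_star.comp (hzc.pow j)))
    have h2 : ∀ i ∈ range (d + 1),
        (∫ θ in (-π)..π, ∑ j ∈ range (d + 1),
          (P.coeff i * (starRingEnd ℂ) (P.coeff j)) *
            (Complex.exp ((θ : ℂ) * Complex.I) ^ i *
              (starRingEnd ℂ) (Complex.exp ((θ : ℂ) * Complex.I) ^ j))) =
        P.coeff i * (starRingEnd ℂ) (P.coeff i) * (2 * π) := by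
      intro i hi
      rw [intervalIntegral.integral_finset_sum]
      swap
      · intro j _
        exact (continuous_const.mul ((hzc.pow i).mul
          (continuous_star.comp (hzc.pow j)))).intervalIntegrable _ _
      have h3 : ∀ j ∈ range (d + 1),
          (∫ θ in (-π)..π, (P.coeff i * (starRingEnd ℂ) (P.coeff j)) *
            (Complex.exp ((θ : ℂ) * Complex.I) ^ i *
              (starRingEnd ℂ) (Complex.exp ((θ : ℂ) * Complex.I) ^ j))) =
          if j = i then P.coeff i * (starRingEnd ℂ) (P.coeff i) * (2 * π) else 0 := by
        intro j _
        rw [intervalIntegral.integral_const_mul, int_exp i j]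
        rcases eq_or_ne j i with h | h
        · subst h; simp
        · simp [h, Ne.symm h]
      rw [Finset.sum_congr rfl h3, Finset.sum_ite_eq' (range (d + 1)) i
        (fun _ => P.coeff i * (starRingEnd ℂ) (P.coeff i) * (2 * π)), if_pos hi]
    rw [Finset.sum_congr rfl h2]
    push_cast
    simp_rw [Complex.mul_conj, Complex.normSq_eq_norm_sq]
    rw [← Finset.sum_mul]
    push_cast
    ring
  rw [intervalIntegral.integral_ofReal] at key
  exact_mod_cast key

lemma sumsq_ext (P : Polynomial ℂ) {M : ℕ} (h : P.natDegree < M) :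
    ∑ k ∈ range M, ‖P.coeff k‖ ^ 2 = ∑ k ∈ range (P.natDegree + 1), ‖P.coeff k‖ ^ 2 := by
  refine (Finset.sum_subset (Finset.range_subset_range.2 h) fun k _ hk => ?_).symm
  rw [Polynomial.coeff_eq_zero_of_natDegree_lt (by simpa using hk)]
  simp

lemma key_mult (P : Polynomial ℂ) (a b : ℂ) (ℓ : ℕ) (hd : P.natDegree < ℓ)
    (hab : ‖a‖ ^ 2 + ‖b‖ ^ 2 = 1) :
    ∑ k ∈ range ((P * (Polynomial.C b + Polynomial.C a * Polynomial.X ^ ℓ)).natDegree + 1),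
      ‖(P * (Polynomial.C b + Polynomial.C a * Polynomial.X ^ ℓ)).coeff k‖ ^ 2 =
    ∑ k ∈ range (P.natDegree + 1), ‖P.coeff k‖ ^ 2 := by
  set Q := P * (Polynomial.C b + Polynomial.C a * Polynomial.X ^ ℓ) with hQ
  set d := P.natDegree
  have hdQ : Q.natDegree < ℓ + (d + 1) := by
    calc Q.natDegree ≤ d + (Polynomial.C b + Polynomial.C a * Polynomial.X ^ ℓ).natDegree :=
          Polynomial.natDegree_mul_le
    _ ≤ d + ℓ := by
        gcongr
        refine le_trans (Polynomial.natDegree_add_le _ _) ?_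
        simp only [Polynomial.natDegree_C, max_le_iff]
        exact ⟨Nat.zero_le _, le_trans (Polynomial.natDegree_C_mul_le _ _)
          (by simp [Polynomial.natDegree_X_pow])⟩
    _ < ℓ + (d + 1) := by omega
  have hco : ∀ k, Q.coeff k =
      P.coeff k * b + (if ℓ ≤ k then P.coeff (k - ℓ) * a else 0) := by
    intro k
    rw [hQ, mul_add, Polynomial.coeff_add, Polynomial.coeff_mul_C,
      show P * (Polynomial.C a * Polynomial.X ^ ℓ) = P * Polynomial.C a * Polynomial.X ^ ℓ by ring,
      Polynomial.coeff_mul_X_pow']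
    congr 1
    split_ifs with h
    · rw [Polynomial.coeff_mul_C]
    · rfl
  rw [← sumsq_ext Q hdQ, Finset.sum_range_add]
  have e1 : ∀ k ∈ range ℓ, ‖Q.coeff k‖ ^ 2 = ‖b‖ ^ 2 * ‖P.coeff k‖ ^ 2 := by
    intro k hk
    rw [hco k, if_neg (by simp at hk; omega), add_zero, norm_mul, mul_pow]
    ring
  have e2 : ∀ i ∈ range (d + 1), ‖Q.coeff (ℓ + i)‖ ^ 2 = ‖a‖ ^ 2 * ‖P.coeff i‖ ^ 2 := by
    intro i hi
    have hP0 : P.coeff (ℓ + i) = 0 :=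
      Polynomial.coeff_eq_zero_of_natDegree_lt (by omega)
    rw [hco (ℓ + i), if_pos (by omega), hP0, zero_mul, zero_add,
      Nat.add_sub_cancel_left, norm_mul, mul_pow]
    ring
  rw [Finset.sum_congr rfl e1, Finset.sum_congr rfl e2, ← Finset.mul_sum, ← Finset.mul_sum,
    sumsq_ext P hd]
  nlinarith [Finset.sum_nonneg fun k (_ : k ∈ range (d + 1)) => sq_nonneg ‖P.coeff k‖]

lemma prod_weight_nonneg (α : ℕ → ℝ) (l : ℕ → ℕ) (hα : ∀ j, α j ∈ Set.Icc (-1:ℝ) 1)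
    (m : ℕ) (θ : ℝ) : 0 ≤ ∏ j ∈ range (m + 1), (1 + α j * Real.cos (l j * θ)) := by
  refine Finset.prod_nonneg fun j _ => ?_
  obtain ⟨h1, h2⟩ := hα j
  nlinarith [Real.neg_one_le_cos ((l j : ℝ) * θ), Real.cos_le_one ((l j : ℝ) * θ)]

lemma riesz_int (α : ℕ → ℝ) (l : ℕ → ℕ) (hα : ∀ j, α j ∈ Set.Icc (-1:ℝ) 1) (m : ℕ)
    (f : ℂ → ℝ) (hf : Continuous f) :
    ∫ z, f z ∂(rieszPartial α l m) =
      (2 * π)⁻¹ * ∫ θ in (-π)..π,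
        (∏ j ∈ range (m + 1), (1 + α j * Real.cos (l j * θ))) *
          f (Complex.exp ((θ : ℂ) * Complex.I)) := by
  set w : ℝ → ℝ := fun θ => (2 * π)⁻¹ * ∏ j ∈ range (m + 1), (1 + α j * Real.cos (l j * θ))
    with hw
  have hw0 : ∀ θ, 0 ≤ w θ := by
    intro θ
    have := prod_weight_nonneg α l hα m θ
    have h2 : (0:ℝ) ≤ (2 * π)⁻¹ := by positivity
    exact mul_nonneg h2 this
  have hwc : Continuous w := by
    apply continuous_const.mul
    exact continuous_finset_prod _ fun j _ =>
      continuous_const.add (continuous_const.mul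
        (Real.continuous_cos.comp (continuous_const.mul continuous_id)))
  have hg : Measurable fun θ : ℝ => Complex.exp ((θ : ℂ) * Complex.I) :=
    (Complex.continuous_exp.comp (Complex.continuous_ofReal.mul continuous_const)).measurable
  rw [rieszPartial, integral_map hg.aemeasurable hf.aestronglyMeasurable]
  have hd : (fun θ : ℝ => ENNReal.ofReal ((2 * Real.pi)⁻¹ *
      ∏ j ∈ Finset.range (m + 1), (1 + α j * Real.cos (l j * θ)))) =
      fun θ => ((w θ).toNNReal : ENNReal) := rfl
  rw [hd, integral_withDensity_eq_integral_smul (hwc.measurable.real_toNNReal)]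
  have hsm : ∀ θ : ℝ, (w θ).toNNReal • f (Complex.exp ((θ : ℂ) * Complex.I)) =
      w θ * f (Complex.exp ((θ : ℂ) * Complex.I)) := by
    intro θ
    rw [NNReal.smul_def, Real.coe_toNNReal _ (hw0 θ), smul_eq_mul]
  simp_rw [hsm]
  rw [← intervalIntegral.integral_of_le (by linarith [Real.pi_pos] : (-π) ≤ π)]
  rw [← intervalIntegral.integral_const_mul]
  congr 1
  ext θ
  rw [hw]
  ring

theorem stmt15 (α : ℕ → ℝ) (hα : ∀ j, α j ∈ Set.Icc (-1 : ℝ) 1)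
    (l : ℕ → ℕ) (hl : ∀ j, 0 < l j) (hlac : ∀ j, 3 * l j ≤ l (j + 1))
    (ρ : Measure ℂ) [IsProbabilityMeasure ρ]
    (hweak : ∀ f : ℂ → ℝ, Continuous f →
      Tendsto (fun n => ∫ z, f z ∂(rieszPartial α l n)) atTop
        (nhds (∫ z, f z ∂ρ)))
    (n : ℕ) :
    (∏ j ∈ Finset.range (n + 1), (1 / 2) * (1 + Real.sqrt (1 - α j ^ 2))) ≤
      szegoE2 ρ (∑ j ∈ Finset.range (n + 1), l j) := by
  classical
  have hα2 : ∀ j, (α j) ^ 2 ≤ 1 := by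
    intro j; obtain ⟨h1, h2⟩ := hα j; nlinarith
  set N := ∑ j ∈ Finset.range (n + 1), l j with hN
  refine le_csInf ⟨_, Polynomial.X ^ N, Polynomial.monic_X_pow N,
    Polynomial.natDegree_X_pow N, rfl⟩ ?_
  rintro x ⟨q, hq, hdeg, rfl⟩
  have hf : Continuous fun z : ℂ => ‖q.eval z‖ ^ 2 := by
    have : Continuous fun z : ℂ => q.eval z := q.continuous
    exact this.norm.pow 2
  refine ge_of_tendsto (hweak _ hf) ?_
  filter_upwards [eventually_ge_atTop n] with m hm
  -- setup
  set F : ℕ → Polynomial ℂ := fun j =>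
    Polynomial.C ((rpB (α j) : ℝ) : ℂ) + Polynomial.C ((rpA (α j) : ℝ) : ℂ)
      * Polynomial.X ^ (l j) with hF
  set P : ℕ → Polynomial ℂ := fun k => q * ∏ j ∈ range (k + 1), F j with hP
  have hab : ∀ j, ‖((rpA (α j) : ℝ) : ℂ)‖ ^ 2 + ‖((rpB (α j) : ℝ) : ℂ)‖ ^ 2 = 1 := by
    intro j
    rw [Complex.norm_real, Complex.norm_real, Real.norm_eq_abs, Real.norm_eq_abs,
      _root_.sq_abs, _root_.sq_abs]
    exact rpAB_sq (α j) (hα2 j)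
  have hL : ∀ k, 2 * (∑ j ∈ range (k + 1), l j) < l (k + 1) := by
    intro k
    induction k with
    | zero =>
      have h30 := hlac 0
      have h10 := hl 0
      simp only [zero_add] at h30 ⊢
      rw [Finset.sum_range_one]
      omega
    | succ k ih => have := hlac (k + 1); rw [Finset.sum_range_succ]; omega
  have hFdeg_le : ∀ j, (F j).natDegree ≤ l j := by
    intro j
    refine le_trans (Polynomial.natDegree_add_le _ _) ?_
    simp only [Polynomial.natDegree_C, max_le_iff]
    exact ⟨Nat.zero_le _, le_trans (Polynomial.natDegree_C_mul_le _ _)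
      (by simp [Polynomial.natDegree_X_pow])⟩
  have hPdeg_le : ∀ k, (P k).natDegree ≤ N + ∑ j ∈ range (k + 1), l j := by
    intro k
    refine le_trans Polynomial.natDegree_mul_le ?_
    rw [hdeg]
    gcongr
    refine le_trans (Polynomial.natDegree_prod_le _ _) ?_
    exact Finset.sum_le_sum fun j _ => hFdeg_le j
  -- the sum of squares is stable
  have hstable : ∀ k, (∑ i ∈ range ((P (n + k)).natDegree + 1), ‖(P (n + k)).coeff i‖ ^ 2) =
      ∑ i ∈ range ((P n).natDegree + 1), ‖(P n).coeff i‖ ^ 2 := by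
    intro k
    induction k with
    | zero => rfl
    | succ k ih =>
      have hstep : P (n + (k + 1)) = P (n + k) *
          (Polynomial.C ((rpB (α (n + k + 1)) : ℝ) : ℂ)
            + Polynomial.C ((rpA (α (n + k + 1)) : ℝ) : ℂ) * Polynomial.X ^ (l (n + k + 1))) := by
        show P (n + k + 1) = _
        rw [hP]
        simp only
        rw [Finset.prod_range_succ, ← mul_assoc]
      have hdlt : (P (n + k)).natDegree < l (n + k + 1) := by
        have h1 := hPdeg_le (n + k)
        have h2 : N ≤ ∑ j ∈ range (n + k + 1), l j :=
          Finset.sum_le_sum_of_subset (Finset.range_subset_range.2 (by omega))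
        have h3 := hL (n + k)
        omega
      rw [hstep, key_mult _ _ _ _ hdlt (hab (n + k + 1)), ih]
  -- the integral equals the sum of squares
  have hmain : ∫ z, ‖q.eval z‖ ^ 2 ∂(rieszPartial α l m) =
      ∑ i ∈ range ((P m).natDegree + 1), ‖(P m).coeff i‖ ^ 2 := by
    rw [riesz_int α l hα m _ hf]
    have hpt : ∀ θ : ℝ, (∏ j ∈ range (m + 1), (1 + α j * Real.cos (l j * θ))) *
        ‖q.eval (Complex.exp ((θ : ℂ) * Complex.I))‖ ^ 2 =
        ‖(P m).eval (Complex.exp ((θ : ℂ) * Complex.I))‖ ^ 2 := by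
      intro θ
      set z := Complex.exp ((θ : ℂ) * Complex.I) with hz
      have hev : (P m).eval z = q.eval z * ∏ j ∈ range (m + 1), (F j).eval z := by
        rw [hP]; simp [Polynomial.eval_mul, Polynomial.eval_prod]
      rw [hev, norm_mul, mul_pow, norm_prod, ← Finset.prod_pow]
      have hfac : ∀ j ∈ range (m + 1), ‖(F j).eval z‖ ^ 2 = 1 + α j * Real.cos (l j * θ) := by
        intro j _
        have hzp : z ^ (l j) = Complex.exp ((((l j : ℝ) * θ : ℝ) : ℂ) * Complex.I) := by
          rw [hz, ← Complex.exp_nat_mul]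
          congr 1
          push_cast
          ring
        have : (F j).eval z = ((rpB (α j) : ℝ) : ℂ) + ((rpA (α j) : ℝ) : ℂ)
            * Complex.exp ((((l j : ℝ) * θ : ℝ) : ℂ) * Complex.I) := by
          rw [hF]; simp [hzp]
        rw [this, factor_norm (rpA (α j)) (rpB (α j)) ((l j : ℝ) * θ)
          (rpAB_sq (α j) (hα2 j)) (α j) (rp2AB (α j))]
      rw [Finset.prod_congr rfl hfac]
      ring
    rw [intervalIntegral.integral_congr (fun θ _ => hpt θ), parseval (P m),
      ← mul_assoc, inv_mul_cancel₀ (by positivity), one_mul]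
  rw [hmain]
  obtain ⟨k, rfl⟩ := Nat.exists_eq_add_of_le hm
  rw [hstable k]
  -- lower bound via the leading coefficient of P n
  have haC : ∀ j, ((rpA (α j) : ℝ) : ℂ) ≠ 0 := by
    intro j
    exact_mod_cast (rpA_pos (α j)).ne'
  have hFdeg : ∀ j, (F j).natDegree = l j := by
    intro j
    refine le_antisymm (hFdeg_le j) ?_
    apply Polynomial.le_natDegree_of_ne_zero
    rw [hF]
    simpa [Polynomial.coeff_add, Polynomial.coeff_C, Polynomial.coeff_C_mul,
      Polynomial.coeff_X_pow, (hl j).ne'] using haC j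
  have hFne : ∀ j, F j ≠ 0 := by
    intro j h0
    have := hFdeg j
    rw [h0] at this
    simp at this
    have hlj := hl j
    omega
  have hFlead : ∀ j, (F j).leadingCoeff = ((rpA (α j) : ℝ) : ℂ) := by
    intro j
    rw [Polynomial.leadingCoeff, hFdeg j, hF]
    simp [Polynomial.coeff_add, Polynomial.coeff_C, Polynomial.coeff_C_mul,
      Polynomial.coeff_X_pow, (hl j).ne']
  have hprodne : (∏ j ∈ range (n + 1), F j) ≠ 0 :=
    Finset.prod_ne_zero_iff.2 fun j _ => hFne j
  have hPn_deg : (P n).natDegree = N + N := by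
    rw [hP]
    simp only
    rw [Polynomial.natDegree_mul hq.ne_zero hprodne, hdeg,
      Polynomial.natDegree_prod _ _ (fun j _ => hFne j)]
    congr 1
    exact Finset.sum_congr rfl fun j _ => hFdeg j
  have hPn_coeff : (P n).coeff (N + N) = ∏ j ∈ range (n + 1), ((rpA (α j) : ℝ) : ℂ) := by
    rw [← hPn_deg, Polynomial.coeff_natDegree, hP]
    simp only
    rw [Polynomial.leadingCoeff_mul, Polynomial.leadingCoeff_prod, hq.leadingCoeff, one_mul]
    exact Finset.prod_congr rfl fun j _ => hFlead j
  have htarget : ‖(P n).coeff (N + N)‖ ^ 2 =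
      ∏ j ∈ range (n + 1), (1 / 2) * (1 + Real.sqrt (1 - α j ^ 2)) := by
    rw [hPn_coeff, ← Complex.ofReal_prod, Complex.norm_real, Real.norm_eq_abs, _root_.sq_abs,
      ← Finset.prod_pow]
    exact Finset.prod_congr rfl fun j _ => by rw [rpA_sq]; ring
  calc (∏ j ∈ Finset.range (n + 1), (1 / 2) * (1 + Real.sqrt (1 - α j ^ 2)))
      = ‖(P n).coeff (N + N)‖ ^ 2 := htarget.symm
    _ ≤ ∑ i ∈ range ((P n).natDegree + 1), ‖(P n).coeff i‖ ^ 2 := by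
        refine Finset.single_le_sum (fun i _ => sq_nonneg ‖(P n).coeff i‖) ?_
        rw [hPn_deg]
        exact Finset.self_mem_range_succ _
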